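/- Under the same hypotheses (Y a unit, divergence-free Killing field on an oriented Riemannian 3-manifold with curl λY), the divergence of E_{ij(1)} = (1/√6)(3 Y_i Y_j − h_{ij}) vanishes: D^k E_{ik(1)} = 0. -/
import Mathlib


noncomputable section

/-- Sign of the ordered pair `(x, y)`. -/
def sgnF {n : ℕ} (x y : Fin n) : ℤ := if x < y then 1 else if y < x then -1 else 0

/-- Levi-Civita symbol: the volume form of an oriented Riemannian 3-manifold in an
oriented orthonormal frame. -/
def eps3R (a b c : Fin 3) : ℝ := ((sgnF a b * sgnF a c * sgnF b c : ℤ) : ℝ)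

/-- Kronecker delta (the metric `h` in an orthonormal frame). -/
def kdR (a b : Fin 3) : ℝ := if a = b then 1 else 0

/-- Components in an orthonormal frame: `Y i = Y_i`, `A k j = D_k Y_j`,
`E1 = E_{ij(1)} = (1/√6)(3 Y_i Y_j − h_{ij})`, `DE k j l = D_k E_{jl(1)}` (Leibniz rule,
`D h = 0`).  If `Y` is a unit divergence-free Killing field with curl `λ Y`, then the
divergence of `E_{ij(1)}` vanishes: `D^k E_{ik(1)} = 0`. -/
theorem stmt_10 (Y : Fin 3 → ℝ) (A : Fin 3 → Fin 3 → ℝ) (lam : ℝ)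
    (E1 : Fin 3 → Fin 3 → ℝ) (DE : Fin 3 → Fin 3 → Fin 3 → ℝ)
    (hunit : ∑ i, Y i * Y i = 1)
    (hKilling : ∀ i j, A i j + A j i = 0)
    (hdiv : ∑ k, A k k = 0)
    (hcurl : ∀ i, (∑ k, ∑ l, eps3R i k l * A k l) = lam * Y i)
    (hE1 : ∀ i j, E1 i j = (Real.sqrt 6)⁻¹ * (3 * Y i * Y j - kdR i j))
    (hDE : ∀ k j l, DE k j l = (Real.sqrt 6)⁻¹ * 3 * (A k j * Y l + A k l * Y j)) :
    ∀ i, (∑ k, DE k i k) = 0 := by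
  have h01 := hKilling 0 1
  have h02 := hKilling 0 2
  have h12 := hKilling 1 2
  have h00 := hKilling 0 0
  have h11 := hKilling 1 1
  have h22 := hKilling 2 2
  have hc0 := hcurl 0
  have hc1 := hcurl 1
  have hc2 := hcurl 2
  simp only [Fin.sum_univ_three, eps3R, sgnF, Fin.lt_def] at hc0 hc1 hc2
  norm_num at hc0 hc1 hc2
  have e00 : A 0 0 = 0 := by linarith
  have e11 : A 1 1 = 0 := by linarith
  have e22 : A 2 2 = 0 := by linarith
  have e01 : A 0 1 = lam * Y 2 / 2 := by linarith
  have e10 : A 1 0 = -(lam * Y 2 / 2) := by linarith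
  have e02 : A 0 2 = -(lam * Y 1 / 2) := by linarith
  have e20 : A 2 0 = lam * Y 1 / 2 := by linarith
  have e12 : A 1 2 = lam * Y 0 / 2 := by linarith
  have e21 : A 2 1 = -(lam * Y 0 / 2) := by linarith
  intro i
  fin_cases i <;>
    simp [Fin.sum_univ_three, hDE, e00, e11, e22,
      e01, e10, e02, e20, e12, e21] <;> ring
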